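/- Let K be a field, n a nonnegative integer, and a, c, p, q ∈ K with a ≠ 1, c ≠ 0, and with (q; q)_k ≠ 0 and (a p/c; p)_k ≠ 0 for 0 ≤ k ≤ n. Then Gosper's bibasic identity holds: Σ_{k=0}^{n} [ (1 − a p^k q^k)/(1 − a) ] · (a; p)_k (c; q)_k c^{−k} / ( (q; q)_k (a p/c; p)_k ) = (a p; p)_n (c q; q)_n c^{−n} / ( (q; q)_n (a p/c; p)_n ). -/

import Mathlib

open Finset

/-- **Gosper's bibasic identity.**
Let `K` be a field, `n ≥ 0`, and `a, c, p, q ∈ K` with `a ≠ 1`, `c ≠ 0`, and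
`(q;q)_k ≠ 0`, `(a p/c;p)_k ≠ 0` for `0 ≤ k ≤ n`.  Then
`∑_{k=0}^{n} ((1 - a p^k q^k)/(1 - a)) (a;p)_k (c;q)_k c^{-k} / ((q;q)_k (a p/c;p)_k)
  = (a p;p)_n (c q;q)_n c^{-n} / ((q;q)_n (a p/c;p)_n)`. -/
theorem gosper_bibasic {K : Type*} [Field K] (n : ℕ) (a c p q : K)
    (ha : a ≠ 1) (hc : c ≠ 0)
    (hqq : ∀ k ≤ n, ∏ j ∈ range k, (1 - q * q ^ j) ≠ 0)
    (hapc : ∀ k ≤ n, ∏ j ∈ range k, (1 - a * p / c * p ^ j) ≠ 0) :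
    ∑ k ∈ range (n + 1),
        (1 - a * p ^ k * q ^ k) / (1 - a) *
          ((∏ j ∈ range k, (1 - a * p ^ j)) * (∏ j ∈ range k, (1 - c * q ^ j)) * (c ^ k)⁻¹) /
          ((∏ j ∈ range k, (1 - q * q ^ j)) * ∏ j ∈ range k, (1 - a * p / c * p ^ j))
      = (∏ j ∈ range n, (1 - a * p * p ^ j)) * (∏ j ∈ range n, (1 - c * q * q ^ j)) *
          (c ^ n)⁻¹ /
          ((∏ j ∈ range n, (1 - q * q ^ j)) * ∏ j ∈ range n, (1 - a * p / c * p ^ j)) := by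
  have ha' : (1 : K) - a ≠ 0 := sub_ne_zero.mpr (Ne.symm ha)
  induction n with
  | zero => simp [div_self ha']
  | succ n ih =>
    have ih' := ih (fun k hk => hqq k (hk.trans (Nat.le_succ _)))
      (fun k hk => hapc k (hk.trans (Nat.le_succ _)))
    rw [Finset.sum_range_succ, ih']
    -- shift the products in the new term
    have hap : (∏ j ∈ range (n + 1), (1 - a * p ^ j))
        = (1 - a) * ∏ j ∈ range n, (1 - a * p * p ^ j) := by
      rw [Finset.prod_range_succ']
      simp only [pow_zero, mul_one, pow_succ']
      ring_nf
    have hcq : (∏ j ∈ range (n + 1), (1 - c * q ^ j))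
        = (1 - c) * ∏ j ∈ range n, (1 - c * q * q ^ j) := by
      rw [Finset.prod_range_succ']
      simp only [pow_zero, mul_one, pow_succ']
      rw [mul_comm]
      congr 1
      apply Finset.prod_congr rfl
      intro j _
      ring
    rw [hap, hcq, Finset.prod_range_succ (f := fun j => 1 - q * q ^ j),
      Finset.prod_range_succ (f := fun j => 1 - a * p / c * p ^ j),
      Finset.prod_range_succ (f := fun j => 1 - a * p * p ^ j),
      Finset.prod_range_succ (f := fun j => 1 - c * q * q ^ j)]
    -- nonzeroness facts
    have hQ : (∏ j ∈ range n, (1 - q * q ^ j)) ≠ 0 :=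
      hqq n (Nat.le_succ _)
    have hA : (∏ j ∈ range n, (1 - a * p / c * p ^ j)) ≠ 0 :=
      hapc n (Nat.le_succ _)
    have hQ1 : (1 - q * q ^ n) ≠ 0 := by
      have := hqq (n + 1) le_rfl
      rw [Finset.prod_range_succ] at this
      exact right_ne_zero_of_mul this
    have hA1 : (1 - a * p / c * p ^ n) ≠ 0 := by
      have := hapc (n + 1) le_rfl
      rw [Finset.prod_range_succ] at this
      exact right_ne_zero_of_mul this
    have hcn : (c : K) ^ n ≠ 0 := pow_ne_zero _ hc
    rw [pow_succ c n, pow_succ p n, pow_succ q n]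
    generalize hApn : (∏ j ∈ range n, (1 - a * p * p ^ j)) = A at *
    generalize hBn : (∏ j ∈ range n, (1 - c * q * q ^ j)) = B at *
    generalize hQn : (∏ j ∈ range n, (1 - q * q ^ j)) = Q at *
    generalize hDn : (∏ j ∈ range n, (1 - a * p / c * p ^ j)) = D at *
    generalize ht : (p : K) ^ n = t at *
    generalize hs : (q : K) ^ n = s at *
    generalize hcn' : (c : K) ^ n = cn at *
    have hA1' : c - a * p * t ≠ 0 := by
      intro h
      apply hA1
      have : (1 : K) - a * p / c * t = (c - a * p * t) / c := by field_simp
      rw [this, h, zero_div]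
    have key : (1 - a * p * t) * (1 - c * q * s) * c - c * (1 - q * s) * (c - a * p * t)
        = (1 - a * (p * t) * (q * s)) * (1 - c) * c := by ring
    have hrw : (1 : K) - a * p / c * t = (c - a * p * t) / c := by field_simp
    rw [hrw]
    have h2 : Q * (1 - q * s) * (D * ((c - a * p * t) / c)) ≠ 0 :=
      mul_ne_zero (mul_ne_zero hQ hQ1) (mul_ne_zero hA (div_ne_zero hA1' hc))
    rw [div_add_div _ _ (mul_ne_zero hQ hA) h2,
      div_eq_div_iff (mul_ne_zero (mul_ne_zero hQ hA) h2) h2]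
    field_simp
    ring
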